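/- For every integer n ≥ 22 and all x ∈ [0,1], the polynomial inequality W_{n−1}(x) ≤ 2·R_{n−2}(x) holds, where W_m(x) = Σ_{i=1}^{m} x^i/i and R_m(x) = W_m(x) − x^m. -/

import Mathlib

noncomputable def Wpoly (m : ℕ) (x : ℝ) : ℝ := ∑ i ∈ Finset.Icc 1 m, x ^ i / i

noncomputable def Rpoly (m : ℕ) (x : ℝ) : ℝ := Wpoly m x - x ^ m

lemma harm20 : (3 : ℝ) ≤ ∑ i ∈ Finset.Icc (1 : ℕ) 20, (1 : ℝ) / (i : ℝ) := by
  norm_num [Finset.sum_Icc_succ_top]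

lemma Wpoly_ge (m : ℕ) (hm : 20 ≤ m) (x : ℝ) (hx0 : 0 ≤ x) (hx1 : x ≤ 1) :
    3 * x ^ m ≤ Wpoly m x := by
  have h1 : (∑ i ∈ Finset.Icc 1 m, x ^ m / i) ≤ Wpoly m x := by
    apply Finset.sum_le_sum
    intro i hi
    simp only [Finset.mem_Icc] at hi
    have : x ^ m ≤ x ^ i := pow_le_pow_of_le_one hx0 hx1 hi.2
    have hi0 : (0 : ℝ) ≤ i := by positivity
    gcongr
  have h2 : x ^ m * ∑ i ∈ Finset.Icc 1 m, (1 : ℝ) / i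
      = ∑ i ∈ Finset.Icc 1 m, x ^ m / i := by
    rw [Finset.mul_sum]; apply Finset.sum_congr rfl; intro i _; ring
  have h3 : (3 : ℝ) ≤ ∑ i ∈ Finset.Icc 1 m, (1 : ℝ) / i := by
    refine le_trans harm20 ?_
    apply Finset.sum_le_sum_of_subset_of_nonneg
    · intro i hi
      simp only [Finset.mem_Icc] at *
      omega
    · intro i _ _; positivity
  nlinarith [pow_nonneg hx0 m]

theorem stmt15 (n : ℕ) (hn : 22 ≤ n) :
    ∀ x ∈ Set.Icc (0 : ℝ) 1, Wpoly (n - 1) x ≤ 2 * Rpoly (n - 2) x := by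
  intro x hx
  obtain ⟨hx0, hx1⟩ := hx
  set m := n - 2 with hm
  have hm20 : 20 ≤ m := by omega
  have hn1 : n - 1 = m + 1 := by omega
  rw [hn1]
  have hsplit : Wpoly (m + 1) x = Wpoly m x + x ^ (m + 1) / (m + 1) := by
    unfold Wpoly
    rw [Finset.sum_Icc_succ_top (by omega : 1 ≤ m + 1)]
    push_cast
    ring
  have hkey := Wpoly_ge m hm20 x hx0 hx1
  have hpow : x ^ (m + 1) ≤ x ^ m := pow_le_pow_of_le_one hx0 hx1 (by omega)
  have hfrac : x ^ (m + 1) / (m + 1) ≤ x ^ m := by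
    have h1 : (1 : ℝ) ≤ (m : ℝ) + 1 := by
      have := (Nat.cast_nonneg m : (0:ℝ) ≤ m); linarith
    calc x ^ (m + 1) / (m + 1) ≤ x ^ (m + 1) := div_le_self (pow_nonneg hx0 _) h1
      _ ≤ x ^ m := hpow
  unfold Rpoly
  rw [hsplit]
  linarith
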